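/- Let Θ = [θ̲, θ̄] with θ̲ < θ̄, let c > 0, let I ⊆ ℝ be open, and let a : I → ℝ be twice continuously differentiable with a'(r) > 0 on I. Let ψ : ℝ → ℝ be continuously differentiable, let u₁, u₁₁ : ℝ × Θ → ℝ be continuous (the first and second partial derivatives of the sender's action payoff U^S in the action, evaluated at (a,θ)), let v : ℝ × Θ → ℝ be continuous (the receiver's marginal payoff U^R₁), let f : Θ → ℝ and q : ℝ × Θ → ℝ be continuous. For r ∈ I, θ ∈ Θ, p ∈ ℝ define s(r,θ,p) = u₁(a(r),θ)·p/c and b(r,θ,p) = r − ψ(s(r,θ,p)); define 𝓐(r) = ∫_Θ v(a(r),θ)·f(θ)·q(b(r,θ,a'(r)),θ)·ψ'(s(r,θ,a'(r)))·u₁(a(r),θ)/c dθ and 𝓑(r) = ∫_Θ v(a(r),θ)·f(θ)·q(b(r,θ,a'(r)),θ)·[1 − ψ'(s(r,θ,a'(r)))·u₁₁(a(r),θ)·(a'(r))²/c] dθ. Suppose u₁ is continuously differentiable in its first argument with derivative u₁₁. Then for each fixed θ the map r ↦ b(r,θ,a'(r)) is differentiable with derivative ∂_r b = 1 − (ψ'(s(r,θ,a'(r)))/c)·[u₁₁(a(r),θ)·(a'(r))²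 + u₁(a(r),θ)·a''(r)], and for every r ∈ I the Bayes equation ∫_Θ v(a(r),θ)·f(θ)·q(b(r,θ,a'(r)),θ)·∂_r b(r,θ,a'(r)) dθ = 0 holds if and only if 𝓐(r)·a''(r) = 𝓑(r). -/

import Mathlib

open MeasureTheory

/-- Theorem 4.1: in the additive-anchor model, the exact Bayes equation of a
regular equilibrium on a smooth region `I` is equivalent to the second-order
ODE `𝓐(r)·a''(r) = 𝓑(r)`, and the rationalizing anchor map
`r ↦ b(r,θ,a'(r))` has the stated derivative. -/
theorem bayes_equation_equiv_ode
    (θl θu : ℝ) (hθ : θl < θu) (c : ℝ) (hc : 0 < c)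
    (I : Set ℝ) (hI : IsOpen I)
    (a a' a'' : ℝ → ℝ)
    (ha' : ∀ r ∈ I, HasDerivAt a (a' r) r)
    (ha'' : ∀ r ∈ I, HasDerivAt a' (a'' r) r)
    (ha'pos : ∀ r ∈ I, 0 < a' r)
    (ψ ψ' : ℝ → ℝ)
    (hψ : ∀ s, HasDerivAt ψ (ψ' s) s)
    (hψ'cont : Continuous ψ')
    (u₁ u₁₁ : ℝ → ℝ → ℝ)
    (hu₁cont : Continuous fun p : ℝ × ℝ => u₁ p.1 p.2)
    (hu₁₁cont : Continuous fun p : ℝ × ℝ => u₁₁ p.1 p.2)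
    (hu₁deriv : ∀ x θ, HasDerivAt (fun y => u₁ y θ) (u₁₁ x θ) x)
    (v : ℝ → ℝ → ℝ) (hv : Continuous fun p : ℝ × ℝ => v p.1 p.2)
    (f : ℝ → ℝ) (hf : Continuous f)
    (q : ℝ → ℝ → ℝ) (hq : Continuous fun p : ℝ × ℝ => q p.1 p.2) :
    -- the rationalizing-anchor derivative
    (∀ θ ∈ Set.Icc θl θu, ∀ r ∈ I,
      HasDerivAt
        (fun r' => r' - ψ (u₁ (a r') θ * a' r' / c))
        (1 - ψ' (u₁ (a r) θ * a' r / c) / c *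
          (u₁₁ (a r) θ * (a' r) ^ 2 + u₁ (a r) θ * a'' r)) r) ∧
    -- equivalence of the Bayes equation with the ODE 𝓐·a'' = 𝓑
    (∀ r ∈ I,
      ((∫ θ in Set.Icc θl θu,
          v (a r) θ * f θ * q (r - ψ (u₁ (a r) θ * a' r / c)) θ *
            (1 - ψ' (u₁ (a r) θ * a' r / c) / c *
              (u₁₁ (a r) θ * (a' r) ^ 2 + u₁ (a r) θ * a'' r))) = 0
        ↔
      (∫ θ in Set.Icc θl θu,
          v (a r) θ * f θ * q (r - ψ (u₁ (a r) θ * a' r / c)) θ *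
            ψ' (u₁ (a r) θ * a' r / c) * u₁ (a r) θ / c) * a'' r
        =
      (∫ θ in Set.Icc θl θu,
          v (a r) θ * f θ * q (r - ψ (u₁ (a r) θ * a' r / c)) θ *
            (1 - ψ' (u₁ (a r) θ * a' r / c) * u₁₁ (a r) θ *
              (a' r) ^ 2 / c)))) := by
  have hψc : Continuous ψ := by
    rw [continuous_iff_continuousAt]; exact fun s => (hψ s).continuousAt
  constructor
  · intro θ hθm r hr
    have h1 : HasDerivAt (fun r' => u₁ (a r') θ) (u₁₁ (a r) θ * a' r) r :=
      (hu₁deriv (a r) θ).comp r (ha' r hr)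
    have h2 : HasDerivAt (fun r' => u₁ (a r') θ * a' r' / c)
        ((u₁₁ (a r) θ * a' r * a' r + u₁ (a r) θ * a'' r) / c) r :=
      (h1.mul (ha'' r hr)).div_const c
    have h3 := (hψ (u₁ (a r) θ * a' r / c)).comp r h2
    have h4 := (hasDerivAt_id r).sub h3
    exact h4.congr_deriv (by ring)
  · intro r hr
    set G : ℝ → ℝ := fun θ =>
      v (a r) θ * f θ * q (r - ψ (u₁ (a r) θ * a' r / c)) θ *
        (1 - ψ' (u₁ (a r) θ * a' r / c) * u₁₁ (a r) θ * (a' r) ^ 2 / c) with hG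
    set H : ℝ → ℝ := fun θ =>
      v (a r) θ * f θ * q (r - ψ (u₁ (a r) θ * a' r / c)) θ *
        ψ' (u₁ (a r) θ * a' r / c) * u₁ (a r) θ / c with hH
    have hcv : Continuous fun θ => v (a r) θ := hv.comp (continuous_const.prodMk continuous_id)
    have hcu : Continuous fun θ => u₁ (a r) θ := hu₁cont.comp (continuous_const.prodMk continuous_id)
    have hcu2 : Continuous fun θ => u₁₁ (a r) θ := hu₁₁cont.comp (continuous_const.prodMk continuous_id)
    have hcψs : Continuous fun θ => ψ' (u₁ (a r) θ * a' r / c) :=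
      hψ'cont.comp ((hcu.mul continuous_const).div_const c)
    have hcq : Continuous fun θ => q (r - ψ (u₁ (a r) θ * a' r / c)) θ :=
      hq.comp (((continuous_const.sub (hψc.comp ((hcu.mul continuous_const).div_const c))).prodMk continuous_id))
    have hGc : Continuous G := by
      exact ((hcv.mul hf).mul hcq).mul
        (continuous_const.sub (((hcψs.mul hcu2).mul continuous_const).div_const c))
    have hHc : Continuous H := by
      exact ((((hcv.mul hf).mul hcq).mul hcψs).mul hcu).div_const c
    have hGi : IntegrableOn G (Set.Icc θl θu) := hGc.integrableOn_Icc
    have hHi : IntegrableOn (fun θ => H θ * a'' r) (Set.Icc θl θu) :=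
      (hHc.mul continuous_const).integrableOn_Icc
    have key : (∫ θ in Set.Icc θl θu,
        v (a r) θ * f θ * q (r - ψ (u₁ (a r) θ * a' r / c)) θ *
          (1 - ψ' (u₁ (a r) θ * a' r / c) / c *
            (u₁₁ (a r) θ * (a' r) ^ 2 + u₁ (a r) θ * a'' r)))
        = (∫ θ in Set.Icc θl θu, G θ) - (∫ θ in Set.Icc θl θu, H θ) * a'' r := by
      have : (∫ θ in Set.Icc θl θu,
          v (a r) θ * f θ * q (r - ψ (u₁ (a r) θ * a' r / c)) θ *
            (1 - ψ' (u₁ (a r) θ * a' r / c) / c *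
              (u₁₁ (a r) θ * (a' r) ^ 2 + u₁ (a r) θ * a'' r)))
          = ∫ θ in Set.Icc θl θu, (G θ - H θ * a'' r) := by
        apply integral_congr_ae
        filter_upwards with θ
        simp only [hG, hH]
        field_simp
        ring
      rw [this, integral_sub hGi hHi, integral_mul_const]
    rw [key]
    constructor
    · intro h; linarith
    · intro h; linarith
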